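/- For every n ≥ 1 there exists a bijection φ from the set of noncrossing partitions of [n] onto the set of 132-avoiding permutations of [n] which is order-preserving from the refinement order to the descent-set order: whenever π ≤ τ in the refinement order on noncrossing partitions, Des(φ(π)) ⊆ Des(φ(τ)). (That is, the poset of 132-avoiding permutations of [n] ordered by containment of descent sets is an extension of the noncrossing partition lattice NC^A_n.) -/

import Mathlib

/-- A permutation `p` of `[n]` (0-based `Fin n`) is 132-avoiding if there are
no positions `a < b < c` with `p a < p c < p b`. -/
def Avoids132 {n : ℕ} (p : Equiv.Perm (Fin n)) : Prop :=
  ∀ a b c : Fin n, a < b → b < c → ¬ (p a < p c ∧ p c < p b)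

/-- The descent set of `p`, as a set of 1-based positions `i ∈ [n-1]`:
`i` is a descent iff `p(i) > p(i+1)`, i.e. (0-based) `p ⟨i-1⟩ > p ⟨i⟩`. -/
def Des {n : ℕ} (p : Equiv.Perm (Fin n)) : Set ℕ :=
  {i | ∃ h : 1 ≤ i ∧ i < n,
        p ⟨i, h.2⟩ < p ⟨i - 1, Nat.lt_of_le_of_lt (Nat.sub_le i 1) h.2⟩}

/-- A set partition of `[n]` (a setoid on `Fin n`) is noncrossing if there are
no `a < b < c < d` with `a, c` in one block and `b, d` in a different block. -/
def IsNoncrossing {n : ℕ} (r : Setoid (Fin n)) : Prop :=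
  ¬ ∃ a b c d : Fin n, a < b ∧ b < c ∧ c < d ∧ r.r a c ∧ r.r b d ∧ ¬ r.r a b

/-- There is a bijection `φ` from noncrossing partitions of `[n]` (ordered by
refinement: `π ≤ τ` iff every block of `τ` is a union of blocks of `π`, which
for setoids is exactly `π ≤ τ`) onto 132-avoiding permutations of `[n]`, which
is order-preserving into the descent-set order. -/
def Tset {n : ℕ} (r : Setoid (Fin n)) : Set ℕ :=
  {i | ∃ h : 1 ≤ i ∧ i < n, ∃ y : Fin n,
        i - 1 < y.val ∧ r.r ⟨i - 1, Nat.lt_of_le_of_lt (Nat.sub_le i 1) h.2⟩ y}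

/-- extend a permutation of `Fin j` to a function `ℕ → ℕ`. -/
def natFun {j : ℕ} (A : Equiv.Perm (Fin j)) (a : ℕ) : ℕ :=
  if h : a < j then (A ⟨a, h⟩).val else 0

lemma natFun_apply {j : ℕ} (A : Equiv.Perm (Fin j)) {a : ℕ} (h : a < j) :
    natFun A a = (A ⟨a, h⟩).val := dif_pos h

lemma natFun_lt {j : ℕ} (A : Equiv.Perm (Fin j)) {a : ℕ} (h : a < j) : natFun A a < j := by
  rw [natFun_apply A h]; exact (A ⟨a, h⟩).isLt

lemma natFun_symm_natFun {j : ℕ} (A : Equiv.Perm (Fin j)) {a : ℕ} (h : a < j) :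
    natFun A.symm (natFun A a) = a := by
  rw [natFun_apply A h, natFun_apply A.symm (A ⟨a, h⟩).isLt]
  simp

lemma natFun_natFun_symm {j : ℕ} (A : Equiv.Perm (Fin j)) {a : ℕ} (h : a < j) :
    natFun A (natFun A.symm a) = a := by
  rw [natFun_apply A.symm h, natFun_apply A (A.symm ⟨a, h⟩).isLt]
  simp

lemma natFun_inj {j : ℕ} (A : Equiv.Perm (Fin j)) {a b : ℕ} (ha : a < j) (hb : b < j)
    (h : natFun A a = natFun A b) : a = b := by
  rw [natFun_apply A ha, natFun_apply A hb] at h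
  simpa using congrArg Fin.val (A.injective (Fin.ext h))

section PermSide
variable {N : ℕ}

/-- value of the reconstructed permutation, at ℕ level -/
def recF (N j : ℕ) {jA jB : ℕ} (A : Equiv.Perm (Fin jA)) (B : Equiv.Perm (Fin jB)) (a : ℕ) : ℕ :=
  if a < j then N - j + natFun A a else if a = j then N else natFun B (a - j - 1)

def recG (N j : ℕ) {jA jB : ℕ} (A : Equiv.Perm (Fin jA)) (B : Equiv.Perm (Fin jB)) (v : ℕ) : ℕ :=
  if v < N - j then j + 1 + natFun B.symm v else if v = N then j else natFun A.symm (v - (N - j))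

variable {j : ℕ} (A : Equiv.Perm (Fin j)) (B : Equiv.Perm (Fin (N - j)))

lemma recF_lt (hj : j ≤ N) {a : ℕ} (ha : a < N + 1) : recF N j A B a < N + 1 := by
  rw [recF]
  split
  · have := natFun_lt A (by omega : a < j); omega
  · split
    · omega
    · have := natFun_lt B (by omega : a - j - 1 < N - j); omega

lemma recG_lt (hj : j ≤ N) {v : ℕ} (hv : v < N + 1) : recG N j A B v < N + 1 := by
  rw [recG]
  split
  · have := natFun_lt B.symm (by omega : v < N - j); omega
  · split
    · omega
    · have := natFun_lt A.symm (by omega : v - (N - j) < j); omega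

lemma recGF (hj : j ≤ N) {a : ℕ} (ha : a < N + 1) : recG N j A B (recF N j A B a) = a := by
  rw [recF]
  rcases Nat.lt_trichotomy a j with h | h | h
  · rw [if_pos h, recG]
    have h1 := natFun_lt A h
    rw [if_neg (by omega), if_neg (by omega)]
    have : N - j + natFun A a - (N - j) = natFun A a := by omega
    rw [this, natFun_symm_natFun A h]
  · rw [if_neg (by omega), if_pos h, recG, if_neg (by omega), if_pos rfl, h]
  · rw [if_neg (by omega), if_neg (by omega), recG,
      if_pos (natFun_lt B (by omega : a - j - 1 < N - j)),
      natFun_symm_natFun B (by omega : a - j - 1 < N - j)]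
    omega

lemma recFG (hj : j ≤ N) {v : ℕ} (hv : v < N + 1) : recF N j A B (recG N j A B v) = v := by
  rw [recG]
  by_cases h : v < N - j
  · rw [if_pos h, recF, if_neg (by omega), if_neg (by omega)]
    have : j + 1 + natFun B.symm v - j - 1 = natFun B.symm v := by omega
    rw [this, natFun_natFun_symm B h]
  · by_cases h2 : v = N
    · rw [if_neg h, if_pos h2, recF, if_neg (by omega), if_pos rfl, h2]
    · have hvj : v - (N - j) < j := by omega
      rw [if_neg h, if_neg h2, recF, if_pos (natFun_lt A.symm hvj),
        natFun_natFun_symm A hvj]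
      omega

/-- the reconstructed permutation -/
def reconP (hj : j ≤ N) : Equiv.Perm (Fin (N + 1)) where
  toFun x := ⟨recF N j A B x.val, recF_lt A B hj x.isLt⟩
  invFun v := ⟨recG N j A B v.val, recG_lt A B hj v.isLt⟩
  left_inv x := by apply Fin.ext; exact recGF A B hj x.isLt
  right_inv v := by apply Fin.ext; exact recFG A B hj v.isLt

lemma reconP_val (hj : j ≤ N) (x : Fin (N + 1)) :
    ((reconP A B hj) x).val = recF N j A B x.val := rfl

end PermSide
section PermSide2
variable {N j : ℕ} (A : Equiv.Perm (Fin j)) (B : Equiv.Perm (Fin (N - j)))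

lemma recF_A {a : ℕ} (h : a < j) : recF N j A B a = N - j + natFun A a := if_pos h

lemma recF_j : recF N j A B j = N := by
  rw [recF, if_neg (lt_irrefl j), if_pos rfl]

lemma recF_B {a : ℕ} (h : j < a) : recF N j A B a = natFun B (a - j - 1) := by
  rw [recF, if_neg (by omega), if_neg (by omega)]

lemma recF_A_ge {a : ℕ} (h : a < j) : N - j ≤ recF N j A B a := by
  rw [recF_A A B h]; omega

lemma recF_A_lt (hj : j ≤ N) {a : ℕ} (h : a < j) : recF N j A B a < N := by
  rw [recF_A A B h]; have := natFun_lt A h; omega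

lemma recF_B_lt {a : ℕ} (ha : a < N + 1) (h : j < a) : recF N j A B a < N - j := by
  rw [recF_B A B h]; exact natFun_lt B (by omega)

lemma reconP_avoids (hj : j ≤ N) (hA : Avoids132 A) (hB : Avoids132 B) :
    Avoids132 (reconP A B hj) := by
  intro a b c hab hbc ⟨h1, h2⟩
  rw [Fin.lt_def] at hab hbc h1 h2
  rw [reconP_val, reconP_val] at h1 h2
  rcases Nat.lt_trichotomy c.val j with hc | hc | hc
  · -- all in A region
    have hb : b.val < j := by omega
    have ha : a.val < j := by omega
    rw [recF_A A B ha, recF_A A B hc] at h1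
    rw [recF_A A B hc, recF_A A B hb] at h2
    simp only [natFun_apply A ha, natFun_apply A hb, natFun_apply A hc] at h1 h2
    exact hA ⟨a.val, ha⟩ ⟨b.val, hb⟩ ⟨c.val, hc⟩ (Fin.mk_lt_mk.mpr hab)
      (Fin.mk_lt_mk.mpr hbc) ⟨by omega, by omega⟩
  · -- c = j : value N is maximal, h2 impossible
    have hb : b.val < j := by omega
    have : recF N j A B c.val = N := by rw [hc]; exact recF_j A B
    rw [this] at h2
    have := recF_A_lt A B hj hb
    omega
  · -- c in B region
    rcases Nat.lt_trichotomy a.val j with ha | ha | ha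
    · -- a in A region: recF a ≥ N - j > recF c, contradicting h1
      have := recF_A_ge A B ha
      have := recF_B_lt A B c.isLt hc
      omega
    · -- a = j : value N maximal, h1 impossible
      have : recF N j A B a.val = N := by rw [ha]; exact recF_j A B
      rw [this] at h1
      have := recF_lt A B hj (a := c.val) c.isLt
      have := recF_B_lt A B c.isLt hc
      omega
    · -- a, b, c all in B region
      have hb : j < b.val := by omega
      rw [recF_B A B ha, recF_B A B hc] at h1
      rw [recF_B A B hc, recF_B A B hb] at h2
      have ha' : a.val - j - 1 < N - j := by have := a.isLt; omega
      have hb' : b.val - j - 1 < N - j := by have := b.isLt; omega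
      have hc' : c.val - j - 1 < N - j := by have := c.isLt; omega
      simp only [natFun_apply B ha', natFun_apply B hb', natFun_apply B hc'] at h1 h2
      exact hB ⟨a.val - j - 1, ha'⟩ ⟨b.val - j - 1, hb'⟩ ⟨c.val - j - 1, hc'⟩
        (Fin.mk_lt_mk.mpr (by omega)) (Fin.mk_lt_mk.mpr (by omega)) ⟨by omega, by omega⟩

lemma des_reconP (hj : j ≤ N) {i : ℕ} :
    i ∈ Des (reconP A B hj) ↔
      (i ∈ Des A ∨ (i = j + 1 ∧ j < N) ∨ ∃ i', i' ∈ Des B ∧ i = j + 1 + i') := by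
  constructor
  · rintro ⟨⟨h1, h2⟩, hlt⟩
    rw [Fin.lt_def, reconP_val, reconP_val] at hlt
    simp only at hlt
    rcases Nat.lt_trichotomy i j with hij | hij | hij
    · -- descent inside A
      left
      have hi1 : i - 1 < j := by omega
      rw [recF_A A B hij, recF_A A B hi1] at hlt
      refine ⟨⟨h1, hij⟩, ?_⟩
      rw [Fin.lt_def]
      rw [natFun_apply A hij, natFun_apply A hi1] at hlt
      omega
    · -- i = j: impossible
      exfalso
      rw [hij] at hlt h1
      rw [recF_j A B, recF_A A B (by omega : j - 1 < j)] at hlt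
      have := natFun_lt A (by omega : j - 1 < j)
      omega
    · rcases Nat.lt_trichotomy i (j + 1) with h' | h' | h'
      · omega
      · right; left; exact ⟨h', by omega⟩
      · -- descent inside B
        right; right
        refine ⟨i - j - 1, ⟨⟨by omega, by omega⟩, ?_⟩, by omega⟩
        rw [Fin.lt_def]
        rw [recF_B A B (by omega : j < i), recF_B A B (by omega : j < i - 1)] at hlt
        rw [natFun_apply B (by omega : i - j - 1 < N - j),
          natFun_apply B (by omega : i - 1 - j - 1 < N - j)] at hlt
        have : i - j - 1 - 1 = i - 1 - j - 1 := by omega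
        simp only [this]
        omega
  · rintro (⟨⟨h1, h2⟩, hlt⟩ | ⟨hij, hjN⟩ | ⟨i', ⟨⟨h1, h2⟩, hlt⟩, hii'⟩)
    · -- from A
      refine ⟨⟨h1, by omega⟩, ?_⟩
      rw [Fin.lt_def, reconP_val, reconP_val]
      simp only
      rw [recF_A A B (by omega : i < j), recF_A A B (by omega : i - 1 < j),
        natFun_apply A (by omega : i < j), natFun_apply A (by omega : i - 1 < j)]
      rw [Fin.lt_def] at hlt
      omega
    · -- the forced descent at j + 1
      subst hij
      refine ⟨⟨by omega, by omega⟩, ?_⟩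
      rw [Fin.lt_def, reconP_val, reconP_val]
      simp only
      have : j + 1 - 1 = j := by omega
      rw [this, recF_j A B, recF_B A B (by omega : j < j + 1)]
      have := natFun_lt B (by omega : j + 1 - j - 1 < N - j)
      omega
    · -- from B
      subst hii'
      refine ⟨⟨by omega, by omega⟩, ?_⟩
      rw [Fin.lt_def, reconP_val, reconP_val]
      simp only
      rw [recF_B A B (by omega : j < j + 1 + i'), recF_B A B (by omega : j < j + 1 + i' - 1),
        natFun_apply B (by omega : j + 1 + i' - j - 1 < N - j),
        natFun_apply B (by omega : j + 1 + i' - 1 - j - 1 < N - j)]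
      rw [Fin.lt_def] at hlt
      have e1 : j + 1 + i' - j - 1 = i' := by omega
      have e2 : j + 1 + i' - 1 - j - 1 = i' - 1 := by omega
      simp only [e1, e2]
      omega

end PermSide2
section PermDecomp
variable {N : ℕ} (p : Equiv.Perm (Fin (N + 1)))
  {j : ℕ} (hj : j ≤ N)

lemma val_ne_N (hpj : (p ⟨j, by omega⟩).val = N) {y : Fin (N + 1)} (hy : y.val ≠ j) :
    (p y).val ≠ N := by
  intro hEq
  have hvv : p y = p ⟨j, by omega⟩ := Fin.ext (by omega)
  have h2 : y.val = j := congrArg Fin.val (p.injective hvv)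
  exact hy h2

variable (hp : Avoids132 p) (hpj : (p ⟨j, by omega⟩).val = N)

include hj hp hpj

lemma val_cross {x y : Fin (N + 1)} (hx : x.val < j) (hy : j < y.val) :
    (p y).val < (p x).val := by
  have hxj : x < (⟨j, by omega⟩ : Fin (N + 1)) := hx
  have hjy : (⟨j, by omega⟩ : Fin (N + 1)) < y := hy
  have h := hp x ⟨j, by omega⟩ y hxj hjy
  have hyne : (p y).val ≠ N := val_ne_N p hj hpj (y := y) (by omega)
  have hylt : (p y).val < N := by have := (p y).isLt; omega
  have h1 : ¬ ((p x).val < (p y).val) := fun hlt =>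
    h ⟨hlt, show (p y).val < (p ⟨j, by omega⟩).val by omega⟩
  have hne : (p x).val ≠ (p y).val := by
    intro hEq
    have h2 : x.val = y.val := congrArg Fin.val (p.injective (Fin.ext hEq))
    omega
  omega

lemma val_ge_A {x : Fin (N + 1)} (hx : x.val < j) : N - j ≤ (p x).val := by
  classical
  have key : ∀ y : Fin (N - j), (p ⟨j + 1 + y.val, by have := y.isLt; omega⟩).val < (p x).val :=
    fun y => val_cross p hj hp hpj hx (show j < j + 1 + y.val by omega)
  let g : Fin (N - j) → Fin ((p x).val) := fun y =>
    ⟨(p ⟨j + 1 + y.val, by have := y.isLt; omega⟩).val, key y⟩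
  have hginj : Function.Injective g := by
    intro y y' hgy
    simp only [g, Fin.mk.injEq] at hgy
    have h2 := congrArg Fin.val (p.injective (Fin.ext hgy))
    have h3 : j + 1 + y.val = j + 1 + y'.val := h2
    exact Fin.ext (by omega)
  have := Fintype.card_le_of_injective g hginj
  simpa using this

lemma val_lt_B {y : Fin (N + 1)} (hy : j < y.val) : (p y).val < N - j := by
  classical
  have hyN : (p y).val < N := by
    have h1 := val_ne_N p hj hpj (y := y) (by omega)
    have := (p y).isLt
    omega
  have bnd : ∀ x : Fin (j + 1), x.val < j →
      (p y).val < (p ⟨x.val, by have := x.isLt; omega⟩).val ∧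
      (p ⟨x.val, by have := x.isLt; omega⟩).val < N := by
    intro x h
    constructor
    · exact val_cross p hj hp hpj (show (⟨x.val, by have := x.isLt; omega⟩ : Fin (N+1)).val < j from h) hy
    · have h2 := val_ne_N p hj hpj (y := (⟨x.val, by have := x.isLt; omega⟩ : Fin (N+1)))
        (show x.val ≠ j by omega)
      have h3 := (p (⟨x.val, by have := x.isLt; omega⟩ : Fin (N+1))).isLt
      omega
  let g : Fin (j + 1) → Fin (N - (p y).val) := fun x =>
    if h : x.val < j then
      ⟨(p ⟨x.val, by have := x.isLt; omega⟩).val - (p y).val - 1, by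
        have := bnd x h; omega⟩
    else ⟨N - (p y).val - 1, by omega⟩
  have hginj : Function.Injective g := by
    intro x x' hgx
    by_cases h : x.val < j <;> by_cases h' : x'.val < j
    · simp only [g, dif_pos h, dif_pos h', Fin.mk.injEq] at hgx
      have c1 := bnd x h
      have c2 := bnd x' h'
      have hv : (p ⟨x.val, by have := x.isLt; omega⟩).val
          = (p ⟨x'.val, by have := x'.isLt; omega⟩).val := by omega
      have h2 := congrArg Fin.val (p.injective (Fin.ext hv))
      exact Fin.ext h2
    · exfalso
      simp only [g, dif_pos h, dif_neg h', Fin.mk.injEq] at hgx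
      have c1 := bnd x h
      omega
    · exfalso
      simp only [g, dif_neg h, dif_pos h', Fin.mk.injEq] at hgx
      have c1 := bnd x' h'
      omega
    · have hx : x.val = j := by have := x.isLt; omega
      have hx' : x'.val = j := by have := x'.isLt; omega
      exact Fin.ext (by omega)
  have := Fintype.card_le_of_injective g hginj
  simp at this
  omega

/-- the A-component of the decomposition, as a function -/
def decAf : Fin j → Fin j := fun x =>
  ⟨(p ⟨x.val, by have := x.isLt; omega⟩).val - (N - j), by
    have h1 := val_ge_A p hj hp hpj (x := ⟨x.val, by have := x.isLt; omega⟩) x.isLt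
    have h2 := val_ne_N p hj hpj (y := (⟨x.val, by have := x.isLt; omega⟩ : Fin (N+1)))
      (show x.val ≠ j by have := x.isLt; omega)
    have h3 := (p (⟨x.val, by have := x.isLt; omega⟩ : Fin (N+1))).isLt
    omega⟩

lemma decAf_inj : Function.Injective (decAf p hj hp hpj) := by
  intro x x' h
  simp only [decAf, Fin.mk.injEq] at h
  have h1 := val_ge_A p hj hp hpj (x := ⟨x.val, by have := x.isLt; omega⟩) x.isLt
  have h1' := val_ge_A p hj hp hpj (x := ⟨x'.val, by have := x'.isLt; omega⟩) x'.isLt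
  have hv : (p ⟨x.val, by have := x.isLt; omega⟩).val
      = (p ⟨x'.val, by have := x'.isLt; omega⟩).val := by omega
  have h2 := congrArg Fin.val (p.injective (Fin.ext hv))
  exact Fin.ext h2

/-- the A-component as a permutation -/
noncomputable def decA : Equiv.Perm (Fin j) :=
  Equiv.ofBijective _ (Finite.injective_iff_bijective.mp (decAf_inj p hj hp hpj))

lemma decA_val (x : Fin j) :
    ((decA p hj hp hpj) x).val = (p ⟨x.val, by have := x.isLt; omega⟩).val - (N - j) := rfl

def decBf : Fin (N - j) → Fin (N - j) := fun x =>
  ⟨(p ⟨j + 1 + x.val, by have := x.isLt; omega⟩).val, by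
    have : j < j + 1 + x.val := by omega
    exact val_lt_B p hj hp hpj this⟩

lemma decBf_inj : Function.Injective (decBf p hj hp hpj) := by
  intro x x' h
  simp only [decBf, Fin.mk.injEq] at h
  have h2 := congrArg Fin.val (p.injective (Fin.ext h))
  have h3 : j + 1 + x.val = j + 1 + x'.val := h2
  exact Fin.ext (by omega)

noncomputable def decB : Equiv.Perm (Fin (N - j)) :=
  Equiv.ofBijective _ (Finite.injective_iff_bijective.mp (decBf_inj p hj hp hpj))

lemma decB_val (x : Fin (N - j)) :
    ((decB p hj hp hpj) x).val = (p ⟨j + 1 + x.val, by have := x.isLt; omega⟩).val := rfl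

lemma decA_avoids : Avoids132 (decA p hj hp hpj) := by
  intro a b c hab hbc hand
  obtain ⟨h1, h2⟩ := hand
  rw [Fin.lt_def] at hab hbc h1 h2
  rw [decA_val, decA_val] at h1 h2
  have ga := val_ge_A p hj hp hpj (x := ⟨a.val, by have := a.isLt; omega⟩) a.isLt
  have gb := val_ge_A p hj hp hpj (x := ⟨b.val, by have := b.isLt; omega⟩) b.isLt
  have gc := val_ge_A p hj hp hpj (x := ⟨c.val, by have := c.isLt; omega⟩) c.isLt
  exact hp ⟨a.val, by have := a.isLt; omega⟩ ⟨b.val, by have := b.isLt; omega⟩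
    ⟨c.val, by have := c.isLt; omega⟩
    (Fin.mk_lt_mk.mpr hab) (Fin.mk_lt_mk.mpr hbc)
    ⟨show ((p _).val < (p _).val) by omega, show ((p _).val < (p _).val) by omega⟩

lemma decB_avoids : Avoids132 (decB p hj hp hpj) := by
  intro a b c hab hbc hand
  obtain ⟨h1, h2⟩ := hand
  rw [Fin.lt_def] at hab hbc h1 h2
  rw [decB_val, decB_val] at h1 h2
  exact hp ⟨j + 1 + a.val, by have := a.isLt; omega⟩ ⟨j + 1 + b.val, by have := b.isLt; omega⟩
    ⟨j + 1 + c.val, by have := c.isLt; omega⟩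
    (Fin.mk_lt_mk.mpr (by omega)) (Fin.mk_lt_mk.mpr (by omega))
    ⟨h1, h2⟩

/-- reconstruction of the decomposition gives back p -/
lemma reconP_decomp : reconP (decA p hj hp hpj) (decB p hj hp hpj) hj = p := by
  apply Equiv.ext
  intro x
  apply Fin.ext
  rw [reconP_val]
  rcases Nat.lt_trichotomy x.val j with hx | hx | hx
  · rw [recF_A _ _ hx, natFun_apply _ hx, decA_val]
    have hxe : (⟨x.val, by have := x.isLt; omega⟩ : Fin (N + 1)) = x := Fin.ext rfl
    rw [hxe]
    have h1 := val_ge_A p hj hp hpj (x := x) hx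
    omega
  · have hxe : x = ⟨j, by omega⟩ := Fin.ext hx
    rw [hxe]
    show recF N j _ _ j = _
    rw [recF_j, hpj]
  · rw [recF_B _ _ hx, natFun_apply _ (show x.val - j - 1 < N - j by have := x.isLt; omega),
      decB_val]
    have hxe : (⟨j + 1 + (x.val - j - 1), by have := x.isLt; omega⟩ : Fin (N + 1)) = x :=
      Fin.ext (by simp; omega)
    rw [hxe]

end PermDecomp
section SetoidSide
variable {N : ℕ}

/-- restriction of a setoid along a map -/
def restrict {m n : ℕ} (r : Setoid (Fin n)) (f : Fin m → Fin n) : Setoid (Fin m) :=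
  ⟨fun a b => r.r (f a) (f b),
    ⟨fun _ => r.iseqv.refl _, fun h => r.iseqv.symm h, fun h h' => r.iseqv.trans h h'⟩⟩

lemma restrict_r {m n : ℕ} (r : Setoid (Fin n)) (f : Fin m → Fin n) (a b : Fin m) :
    (restrict r f).r a b ↔ r.r (f a) (f b) := Iff.rfl

lemma restrict_nc {m n : ℕ} (r : Setoid (Fin n)) (f : Fin m → Fin n)
    (hf : StrictMono f) (hr : IsNoncrossing r) : IsNoncrossing (restrict r f) := by
  rintro ⟨a, b, c, d, hab, hbc, hcd, h1, h2, h3⟩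
  exact hr ⟨f a, f b, f c, f d, hf hab, hf hbc, hf hcd, h1, h2, h3⟩

/-- classifier function for the reconstructed setoid -/
def clsf (N j : ℕ) (rA : Setoid (Fin j)) (rB : Setoid (Fin (N - j))) (x : Fin (N + 1)) :
    Quotient rA ⊕ (Quotient rB ⊕ Unit) :=
  if hx : x.val < j then Sum.inl (Quotient.mk rA ⟨x.val, hx⟩)
  else if hx' : j < x.val then
    Sum.inr (Sum.inl (Quotient.mk rB ⟨x.val - j - 1, by have := x.isLt; omega⟩))
  else if hm : j < N then Sum.inr (Sum.inl (Quotient.mk rB ⟨N - j - 1, by omega⟩))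
  else Sum.inr (Sum.inr ())

/-- the reconstructed setoid -/
def reconS (N j : ℕ) (rA : Setoid (Fin j)) (rB : Setoid (Fin (N - j))) :
    Setoid (Fin (N + 1)) :=
  Setoid.ker (clsf N j rA rB)

variable {j : ℕ} (rA : Setoid (Fin j)) (rB : Setoid (Fin (N - j)))

lemma reconS_r {x y : Fin (N + 1)} :
    (reconS N j rA rB).r x y ↔ clsf N j rA rB x = clsf N j rA rB y := Iff.rfl

lemma reconS_AA {x y : Fin (N + 1)} (hx : x.val < j) (hy : y.val < j) :
    (reconS N j rA rB).r x y ↔ rA.r ⟨x.val, hx⟩ ⟨y.val, hy⟩ := by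
  rw [reconS_r, clsf, clsf, dif_pos hx, dif_pos hy]
  constructor
  · intro h
    exact Quotient.eq.mp (Sum.inl.inj h)
  · intro h
    exact congrArg Sum.inl (Quotient.sound h)

lemma reconS_BB {x y : Fin (N + 1)} (hx : j < x.val) (hy : j < y.val) :
    (reconS N j rA rB).r x y ↔
      rB.r ⟨x.val - j - 1, by have := x.isLt; omega⟩ ⟨y.val - j - 1, by have := y.isLt; omega⟩ := by
  rw [reconS_r, clsf, clsf, dif_neg (by omega), dif_pos hx, dif_neg (by omega), dif_pos hy]
  constructor
  · intro h
    exact Quotient.eq.mp (Sum.inl.inj (Sum.inr.inj h))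
  · intro h
    exact congrArg (Sum.inr ∘ Sum.inl) (Quotient.sound h)

lemma reconS_notAB {x y : Fin (N + 1)} (hx : x.val < j) (hy : j ≤ y.val) :
    ¬ (reconS N j rA rB).r x y := by
  rw [reconS_r, clsf, clsf, dif_pos hx]
  intro h
  by_cases hy' : j < y.val
  · rw [dif_neg (by omega), dif_pos hy'] at h; cases h
  · rw [dif_neg (by omega), dif_neg hy'] at h
    by_cases hm : j < N
    · rw [dif_pos hm] at h; cases h
    · rw [dif_neg hm] at h; cases h

lemma reconS_jB {x y : Fin (N + 1)} (hx : x.val = j) (hy : j < y.val) :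
    (reconS N j rA rB).r x y ↔
      rB.r ⟨N - j - 1, by have := y.isLt; omega⟩ ⟨y.val - j - 1, by have := y.isLt; omega⟩ := by
  have hm : j < N := by have := y.isLt; omega
  rw [reconS_r, clsf, clsf, dif_neg (by omega), dif_neg (by omega), dif_pos hm,
    dif_neg (by omega), dif_pos hy]
  constructor
  · intro h
    exact Quotient.eq.mp (Sum.inl.inj (Sum.inr.inj h))
  · intro h
    exact congrArg (Sum.inr ∘ Sum.inl) (Quotient.sound h)

lemma reconS_jj {x y : Fin (N + 1)} (hx : x.val = j) (hy : y.val = j) :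
    (reconS N j rA rB).r x y := by
  have : x = y := Fin.ext (by omega)
  rw [this]

/-- last is related to position j -/
lemma reconS_j_last (hj : j ≤ N) :
    (reconS N j rA rB).r ⟨j, by omega⟩ ⟨N, by omega⟩ := by
  rcases Nat.lt_or_ge j N with hm | hm
  · exact (reconS_jB rA rB (x := ⟨j, by omega⟩) (y := ⟨N, by omega⟩) rfl hm).mpr
      (rB.iseqv.refl _)
  · exact reconS_jj rA rB (x := ⟨j, by omega⟩) (y := ⟨N, by omega⟩) rfl (show N = j by omega)

lemma reconS_nc (hj : j ≤ N) (hA : IsNoncrossing rA) (hB : IsNoncrossing rB) :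
    IsNoncrossing (reconS N j rA rB) := by
  rintro ⟨a, b, c, d, hab, hbc, hcd, h1, h2, h3⟩
  rw [Fin.lt_def] at hab hbc hcd
  rcases Nat.lt_or_ge a.val j with ha | ha
  · -- a in A-region
    have hc : c.val < j := by
      by_contra hc
      exact reconS_notAB rA rB ha (by omega) h1
    have hb : b.val < j := by omega
    have hd : d.val < j := by
      by_contra hd
      exact reconS_notAB rA rB hb (by omega) h2
    rw [reconS_AA rA rB ha hc] at h1
    rw [reconS_AA rA rB hb hd] at h2
    rw [reconS_AA rA rB ha hb] at h3
    exact hA ⟨⟨a.val, ha⟩, ⟨b.val, hb⟩, ⟨c.val, hc⟩, ⟨d.val, hd⟩,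
      Fin.mk_lt_mk.mpr hab, Fin.mk_lt_mk.mpr hbc, Fin.mk_lt_mk.mpr hcd, h1, h2, h3⟩
  · -- a in {j} ∪ B-region; then all of b c d are in the strict B-region
    have hb : j < b.val := by omega
    have hc : j < c.val := by omega
    have hd : j < d.val := by omega
    rw [reconS_BB rA rB hb hd] at h2
    rcases Nat.lt_or_ge j a.val with ha' | ha'
    · -- a strictly in B-region
      rw [reconS_BB rA rB ha' hc] at h1
      rw [reconS_BB rA rB ha' hb] at h3
      exact hB ⟨⟨a.val - j - 1, by have := a.isLt; omega⟩, ⟨b.val - j - 1, by have := b.isLt; omega⟩,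
        ⟨c.val - j - 1, by have := c.isLt; omega⟩, ⟨d.val - j - 1, by have := d.isLt; omega⟩,
        Fin.mk_lt_mk.mpr (by omega), Fin.mk_lt_mk.mpr (by omega), Fin.mk_lt_mk.mpr (by omega),
        h1, h2, h3⟩
    · -- a = j
      have haj : a.val = j := by omega
      rw [reconS_jB rA rB haj hc] at h1
      rw [reconS_jB rA rB haj hb] at h3
      -- crossing in rB : (b', c', d', lastB)
      have hdN : d.val ≤ N := by have := d.isLt; omega
      by_cases hdl : d.val = N
      · -- then b ~ lastB, contradicting h3
        apply h3
        have he : (⟨d.val - j - 1, by have := d.isLt; omega⟩ : Fin (N - j))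
            = ⟨N - j - 1, by have := d.isLt; omega⟩ :=
          Fin.ext (show d.val - j - 1 = N - j - 1 by omega)
        rw [he] at h2
        exact rB.iseqv.symm h2
      · have hbB : b.val - j - 1 < N - j := by have := b.isLt; omega
        have hcB : c.val - j - 1 < N - j := by have := c.isLt; omega
        have hdB : d.val - j - 1 < N - j := by have := d.isLt; omega
        have hlB : N - j - 1 < N - j := by have := c.isLt; omega
        apply hB
        refine ⟨⟨b.val - j - 1, hbB⟩, ⟨c.val - j - 1, hcB⟩, ⟨d.val - j - 1, hdB⟩,
          ⟨N - j - 1, hlB⟩, ?_, ?_, ?_, ?_, ?_, ?_⟩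
        · exact Fin.mk_lt_mk.mpr (by omega)
        · exact Fin.mk_lt_mk.mpr (by omega)
        · exact Fin.mk_lt_mk.mpr (by omega)
        · exact h2
        · exact rB.iseqv.symm h1
        · intro hbc'
          exact h3 (rB.iseqv.trans h1 (rB.iseqv.symm hbc'))

end SetoidSide
section SetoidDecomp
variable {N : ℕ}

open Classical in
/-- the minimum of the block containing the last element -/
noncomputable def minj (r : Setoid (Fin (N + 1))) : ℕ :=
  Nat.find (p := fun k => ∃ hk : k < N + 1, r.r ⟨k, hk⟩ ⟨N, by omega⟩)
    ⟨N, by omega, r.iseqv.refl _⟩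

open Classical in
lemma minj_spec (r : Setoid (Fin (N + 1))) :
    ∃ hk : minj r < N + 1, r.r ⟨minj r, hk⟩ ⟨N, by omega⟩ :=
  Nat.find_spec (p := fun k => ∃ hk : k < N + 1, r.r ⟨k, hk⟩ ⟨N, by omega⟩)
    ⟨N, by omega, r.iseqv.refl _⟩

open Classical in
lemma minj_min (r : Setoid (Fin (N + 1))) {x : Fin (N + 1)}
    (hx : r.r x ⟨N, by omega⟩) : minj r ≤ x.val := by
  by_contra h
  have h2 : x.val < minj r := by omega
  have h3 := Nat.find_min (p := fun k => ∃ hk : k < N + 1, r.r ⟨k, hk⟩ ⟨N, by omega⟩)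
    ⟨N, by omega, r.iseqv.refl _⟩ (m := x.val) h2
  exact h3 ⟨x.isLt, hx⟩

lemma minj_le (r : Setoid (Fin (N + 1))) : minj r ≤ N := by
  have := minj_min r (x := ⟨N, by omega⟩) (r.iseqv.refl _)
  exact this

lemma minj_rel (r : Setoid (Fin (N + 1))) :
    r.r ⟨minj r, by have := minj_le r; omega⟩ ⟨N, by omega⟩ := by
  obtain ⟨hk, h⟩ := minj_spec r
  convert h using 2

/-- no relations across the min of the last block -/
lemma setoid_cross (r : Setoid (Fin (N + 1))) (hr : IsNoncrossing r)
    {x y : Fin (N + 1)} (hx : x.val < minj r) (hy : minj r ≤ y.val) : ¬ r.r x y := by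
  intro hrel
  by_cases hyl : r.r y ⟨N, by omega⟩
  · have : r.r x ⟨N, by omega⟩ := r.iseqv.trans hrel hyl
    have := minj_min r this
    omega
  · -- minj < y < N, crossing (x, minj, y, last)
    have hym : y.val ≠ minj r := by
      intro h
      apply hyl
      have : y = ⟨minj r, by have := minj_le r; omega⟩ := Fin.ext h
      rw [this]
      exact minj_rel r
    have hyN : y.val ≠ N := by
      intro h
      apply hyl
      have : y = ⟨N, by omega⟩ := Fin.ext h
      rw [this]
    apply hr
    refine ⟨x, ⟨minj r, by have := minj_le r; omega⟩, y, ⟨N, by omega⟩,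
      ?_, ?_, ?_, hrel, minj_rel r, ?_⟩
    · exact hx
    · exact (show minj r < y.val by omega)
    · exact (show y.val < N by have := y.isLt; omega)
    · intro hxm
      have : r.r x ⟨N, by omega⟩ := r.iseqv.trans hxm (minj_rel r)
      have := minj_min r this
      omega

/-- A-side restriction -/
noncomputable def decSA (r : Setoid (Fin (N + 1))) : Setoid (Fin (minj r)) :=
  restrict r (fun a => ⟨a.val, by have := a.isLt; have := minj_le r; omega⟩)

noncomputable def decSB (r : Setoid (Fin (N + 1))) : Setoid (Fin (N - minj r)) :=
  restrict r (fun b => ⟨minj r + 1 + b.val, by have := b.isLt; omega⟩)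

lemma decSA_nc (r : Setoid (Fin (N + 1))) (hr : IsNoncrossing r) : IsNoncrossing (decSA r) :=
  restrict_nc r _ (fun _ _ h => Fin.mk_lt_mk.mpr h) hr

lemma decSB_nc (r : Setoid (Fin (N + 1))) (hr : IsNoncrossing r) : IsNoncrossing (decSB r) :=
  restrict_nc r _ (fun _ _ h => Fin.mk_lt_mk.mpr (by omega)) hr

/-- reconstruction of the decomposition -/
lemma reconS_decomp (r : Setoid (Fin (N + 1))) (hr : IsNoncrossing r) :
    reconS N (minj r) (decSA r) (decSB r) = r := by
  set j := minj r with hjdef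
  have hjN : j ≤ N := minj_le r
  apply Setoid.ext
  intro x y
  rcases Nat.lt_trichotomy x.val j with hx | hx | hx
  · rcases Nat.lt_or_ge y.val j with hy | hy
    · rw [reconS_AA _ _ hx hy, decSA, restrict_r]
    · constructor
      · intro h; exact absurd h (reconS_notAB _ _ hx hy)
      · intro h; exact absurd h (setoid_cross r hr hx hy)
  · -- x.val = j
    rcases Nat.lt_trichotomy y.val j with hy | hy | hy
    · constructor
      · intro h; exact absurd ((reconS N j (decSA r) (decSB r)).iseqv.symm h)
          (reconS_notAB _ _ hy (by omega))
      · intro h; exact absurd (r.iseqv.symm h) (setoid_cross r hr hy (by omega))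
    · -- both = j
      have hxy : x = y := Fin.ext (by omega)
      rw [hxy]
      constructor
      · intro _; exact r.iseqv.refl _
      · intro _; exact (reconS N j (decSA r) (decSB r)).iseqv.refl _
    · -- x = j, y > j
      rw [reconS_jB _ _ hx hy, decSB, restrict_r]
      have e1 : (⟨j + 1 + (N - j - 1), by have := y.isLt; omega⟩ : Fin (N + 1)) = ⟨N, by omega⟩ :=
        Fin.ext (show j + 1 + (N - j - 1) = N by have := y.isLt; omega)
      have e2 : (⟨j + 1 + (y.val - j - 1), by have := y.isLt; omega⟩ : Fin (N + 1)) = y :=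
        Fin.ext (show j + 1 + (y.val - j - 1) = y.val by omega)
      rw [e1, e2]
      have hxj : x = ⟨j, by omega⟩ := Fin.ext hx
      constructor
      · intro h
        rw [hxj]
        exact r.iseqv.trans (minj_rel r) h
      · intro h
        rw [hxj] at h
        exact r.iseqv.trans (r.iseqv.symm (minj_rel r)) h
  · -- x > j
    rcases Nat.lt_trichotomy y.val j with hy | hy | hy
    · constructor
      · intro h; exact absurd ((reconS N j (decSA r) (decSB r)).iseqv.symm h)
          (reconS_notAB _ _ hy (by omega))
      · intro h; exact absurd (r.iseqv.symm h) (setoid_cross r hr hy (by omega))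
    · -- y = j, x > j : symmetric to the jB case
      rw [show ((reconS N j (decSA r) (decSB r)).r x y) ↔
          ((reconS N j (decSA r) (decSB r)).r y x) from
          ⟨(reconS N j (decSA r) (decSB r)).iseqv.symm,
           (reconS N j (decSA r) (decSB r)).iseqv.symm⟩]
      rw [reconS_jB _ _ hy hx, decSB, restrict_r]
      have e1 : (⟨j + 1 + (N - j - 1), by have := x.isLt; omega⟩ : Fin (N + 1)) = ⟨N, by omega⟩ :=
        Fin.ext (show j + 1 + (N - j - 1) = N by have := x.isLt; omega)
      have e2 : (⟨j + 1 + (x.val - j - 1), by have := x.isLt; omega⟩ : Fin (N + 1)) = x :=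
        Fin.ext (show j + 1 + (x.val - j - 1) = x.val by omega)
      rw [e1, e2]
      have hyj : y = ⟨j, by omega⟩ := Fin.ext hy
      constructor
      · intro h
        rw [hyj]
        exact r.iseqv.symm (r.iseqv.trans (minj_rel r) h)
      · intro h
        rw [hyj] at h
        exact r.iseqv.trans (r.iseqv.symm (minj_rel r)) (r.iseqv.symm h)
    · -- both > j
      rw [reconS_BB _ _ hx hy, decSB, restrict_r]
      have e1 : (⟨j + 1 + (x.val - j - 1), by have := x.isLt; omega⟩ : Fin (N + 1)) = x :=
        Fin.ext (show j + 1 + (x.val - j - 1) = x.val by omega)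
      have e2 : (⟨j + 1 + (y.val - j - 1), by have := y.isLt; omega⟩ : Fin (N + 1)) = y :=
        Fin.ext (show j + 1 + (y.val - j - 1) = y.val by omega)
      rw [e1, e2]

end SetoidDecomp
section TsetLaw
variable {N j : ℕ} (rA : Setoid (Fin j)) (rB : Setoid (Fin (N - j)))

lemma minj_reconS (hj : j ≤ N) : minj (reconS N j rA rB) = j := by
  apply le_antisymm
  · exact minj_min _ (x := ⟨j, by omega⟩) (reconS_j_last rA rB hj)
  · by_contra h
    have h2 : minj (reconS N j rA rB) < j := by omega
    have h3 := minj_rel (reconS N j rA rB)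
    exact reconS_notAB rA rB (x := ⟨minj (reconS N j rA rB), by have := minj_le (reconS N j rA rB); omega⟩)
      (y := ⟨N, by omega⟩) h2 (show j ≤ N from hj) h3

lemma tset_reconS (hj : j ≤ N) {i : ℕ} :
    i ∈ Tset (reconS N j rA rB) ↔
      (i ∈ Tset rA ∨ (i = j + 1 ∧ j < N) ∨ ∃ i', i' ∈ Tset rB ∧ i = j + 1 + i') := by
  constructor
  · rintro ⟨⟨h1, h2⟩, y, hy, hrel⟩
    rcases Nat.lt_trichotomy (i - 1) j with he | he | he
    · -- element in A region
      have hyj : y.val < j := by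
        by_contra hyj
        exact reconS_notAB rA rB he (by omega) hrel
      have hij : i < j := by omega
      left
      refine ⟨⟨h1, hij⟩, ⟨y.val, hyj⟩, hy, ?_⟩
      exact (reconS_AA rA rB he hyj).mp hrel
    · -- element is j itself
      right; left
      have : j < y.val := by omega
      have := y.isLt
      exact ⟨by omega, by omega⟩
    · -- element in B region
      right; right
      have hyB : j < y.val := by omega
      have hrel' := (reconS_BB rA rB (by omega : j < i - 1) hyB).mp hrel
      refine ⟨i - j - 1, ⟨⟨by omega, by have := y.isLt; omega⟩,
        ⟨y.val - j - 1, by have := y.isLt; omega⟩,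
        show i - j - 1 - 1 < y.val - j - 1 by omega, ?_⟩, by omega⟩
      have hmk : (⟨i - j - 1 - 1, by have := y.isLt; omega⟩ : Fin (N - j))
          = ⟨i - 1 - j - 1, by have := y.isLt; omega⟩ :=
        Fin.ext (show i - j - 1 - 1 = i - 1 - j - 1 by omega)
      rw [hmk]
      exact hrel'
  · rintro (⟨⟨h1, h2⟩, yA, hyA, hrel⟩ | ⟨hij, hjN⟩ | ⟨i', ⟨⟨h1, h2⟩, yB, hyB, hrel⟩, hii⟩)
    · refine ⟨⟨h1, by omega⟩, ⟨yA.val, by have := yA.isLt; omega⟩,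
        show i - 1 < yA.val from hyA, ?_⟩
      exact (reconS_AA rA rB (by omega : i - 1 < j) yA.isLt).mpr hrel
    · subst hij
      refine ⟨⟨by omega, by omega⟩, ⟨N, by omega⟩, show j + 1 - 1 < N by omega, ?_⟩
      have hmk : (⟨j + 1 - 1, by omega⟩ : Fin (N + 1)) = ⟨j, by omega⟩ :=
        Fin.ext (show j + 1 - 1 = j by omega)
      rw [hmk]
      exact reconS_j_last rA rB hj
    · subst hii
      have hyBlt := yB.isLt
      refine ⟨⟨by omega, by omega⟩, ⟨j + 1 + yB.val, by omega⟩,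
        show j + 1 + i' - 1 < j + 1 + yB.val by omega, ?_⟩
      refine (reconS_BB rA rB (by omega : j < j + 1 + i' - 1) (by omega : j < j + 1 + yB.val)).mpr ?_
      have hmk1 : (⟨j + 1 + i' - 1 - j - 1, by omega⟩ : Fin (N - j))
          = ⟨i' - 1, by omega⟩ := Fin.ext (show j + 1 + i' - 1 - j - 1 = i' - 1 by omega)
      have hmk2 : (⟨j + 1 + yB.val - j - 1, by omega⟩ : Fin (N - j)) = yB :=
        Fin.ext (show j + 1 + yB.val - j - 1 = yB.val by omega)
      rw [hmk1, hmk2]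
      exact hrel

end TsetLaw
section Assembly

abbrev NCt (n : ℕ) := {r : Setoid (Fin n) // IsNoncrossing r}
abbrev Avt (n : ℕ) := {p : Equiv.Perm (Fin n) // Avoids132 p}

variable {N : ℕ}

noncomputable def GS : (Σ j : Fin (N + 1), NCt j.val × NCt (N - j.val)) → NCt (N + 1) :=
  fun s => ⟨reconS N s.1.val s.2.1.1 s.2.2.1,
    reconS_nc _ _ (by have := s.1.isLt; omega) s.2.1.2 s.2.2.2⟩

noncomputable def GP : (Σ j : Fin (N + 1), Avt j.val × Avt (N - j.val)) → Avt (N + 1) :=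
  fun s => ⟨reconP s.2.1.1 s.2.2.1 (by have := s.1.isLt; omega),
    reconP_avoids _ _ (by have := s.1.isLt; omega) s.2.1.2 s.2.2.2⟩

lemma reconP_symm_N {j : ℕ} (A : Equiv.Perm (Fin j)) (B : Equiv.Perm (Fin (N - j)))
    (hj : j ≤ N) : (((reconP A B hj).symm) ⟨N, by omega⟩).val = j := by
  show recG N j A B N = j
  rw [recG, if_neg (by omega), if_pos rfl]

set_option maxHeartbeats 1000000 in
lemma GS_bij : Function.Bijective (GS (N := N)) := by
  constructor
  · rintro ⟨j, ⟨rA, hncA⟩, ⟨rB, hncB⟩⟩ ⟨j', ⟨rA', hncA'⟩, ⟨rB', hncB'⟩⟩ h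
    have hEq : reconS N j.val rA rB = reconS N j'.val rA' rB' := congrArg Subtype.val h
    have hjj : j = j' := by
      apply Fin.ext
      have e1 := minj_reconS rA rB (by have := j.isLt; omega : j.val ≤ N)
      have e2 := minj_reconS rA' rB' (by have := j'.isLt; omega : j'.val ≤ N)
      rw [← e1, ← e2, hEq]
    subst hjj
    have hA : rA = rA' := by
      apply Setoid.ext
      intro a b
      have e1 := reconS_AA rA rB (x := ⟨a.val, by have := a.isLt; have := j.isLt; omega⟩)
        (y := ⟨b.val, by have := b.isLt; have := j.isLt; omega⟩) a.isLt b.isLt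
      have e2 := reconS_AA rA' rB' (x := ⟨a.val, by have := a.isLt; have := j.isLt; omega⟩)
        (y := ⟨b.val, by have := b.isLt; have := j.isLt; omega⟩) a.isLt b.isLt
      rw [hEq] at e1
      exact ⟨fun hh => e2.mp (e1.mpr hh), fun hh => e1.mp (e2.mpr hh)⟩
    have hB : rB = rB' := by
      apply Setoid.ext
      intro a b
      have hja : j.val < j.val + 1 + a.val := by omega
      have hjb : j.val < j.val + 1 + b.val := by omega
      have e1 := reconS_BB rA rB (x := ⟨j.val + 1 + a.val, by have := a.isLt; have := j.isLt; omega⟩)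
        (y := ⟨j.val + 1 + b.val, by have := b.isLt; have := j.isLt; omega⟩) hja hjb
      have e2 := reconS_BB rA' rB' (x := ⟨j.val + 1 + a.val, by have := a.isLt; have := j.isLt; omega⟩)
        (y := ⟨j.val + 1 + b.val, by have := b.isLt; have := j.isLt; omega⟩) hja hjb
      rw [hEq] at e1
      have ea : (⟨j.val + 1 + a.val - j.val - 1, by have := a.isLt; have := j.isLt; omega⟩ : Fin (N - j.val)) = a :=
        Fin.ext (show j.val + 1 + a.val - j.val - 1 = a.val by omega)
      have eb : (⟨j.val + 1 + b.val - j.val - 1, by have := b.isLt; have := j.isLt; omega⟩ : Fin (N - j.val)) = b :=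
        Fin.ext (show j.val + 1 + b.val - j.val - 1 = b.val by omega)
      rw [ea, eb] at e1 e2
      exact ⟨fun hh => e2.mp (e1.mpr hh), fun hh => e1.mp (e2.mpr hh)⟩
    subst hA; subst hB
    rfl
  · rintro ⟨r, hr⟩
    refine ⟨⟨⟨minj r, by have := minj_le r; omega⟩,
      ⟨decSA r, decSA_nc r hr⟩, ⟨decSB r, decSB_nc r hr⟩⟩, ?_⟩
    exact Subtype.ext (reconS_decomp r hr)

set_option maxHeartbeats 1000000 in
lemma GP_bij : Function.Bijective (GP (N := N)) := by
  constructor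
  · rintro ⟨j, ⟨A, hvA⟩, ⟨B, hvB⟩⟩ ⟨j', ⟨A', hvA'⟩, ⟨B', hvB'⟩⟩ h
    have hEq : reconP A B (by have := j.isLt; omega) = reconP A' B' (by have := j'.isLt; omega) :=
      congrArg Subtype.val h
    have hjj : j = j' := by
      apply Fin.ext
      have e1 := reconP_symm_N A B (by have := j.isLt; omega : j.val ≤ N)
      have e2 := reconP_symm_N A' B' (by have := j'.isLt; omega : j'.val ≤ N)
      rw [← e1, ← e2, hEq]
    subst hjj
    have happ : ∀ z : Fin (N + 1), recF N j.val A B z.val = recF N j.val A' B' z.val := by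
      intro z
      have : (reconP A B (by have := j.isLt; omega : j.val ≤ N)) z
          = (reconP A' B' (by have := j.isLt; omega : j.val ≤ N)) z := by rw [hEq]
      exact congrArg Fin.val this
    have hA : A = A' := by
      apply Equiv.ext
      intro x
      have hx : x.val < j.val := x.isLt
      have h1 := happ ⟨x.val, by have := j.isLt; omega⟩
      rw [recF_A A B hx, recF_A A' B' hx, natFun_apply A hx, natFun_apply A' hx] at h1
      exact Fin.ext (show (A ⟨x.val, hx⟩).val = (A' ⟨x.val, hx⟩).val by omega)
    have hB : B = B' := by
      apply Equiv.ext
      intro x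
      have hx : j.val < j.val + 1 + x.val := by omega
      have h1 := happ ⟨j.val + 1 + x.val, by have := x.isLt; have := j.isLt; omega⟩
      rw [recF_B A B hx, recF_B A' B' hx] at h1
      have e : j.val + 1 + x.val - j.val - 1 = x.val := by omega
      rw [e, natFun_apply B x.isLt, natFun_apply B' x.isLt] at h1
      exact Fin.ext (show (B ⟨x.val, x.isLt⟩).val = (B' ⟨x.val, x.isLt⟩).val by omega)
    subst hA; subst hB
    rfl
  · rintro ⟨p, hp⟩
    have hjle : (p.symm ⟨N, by omega⟩).val ≤ N := by
      have := (p.symm ⟨N, by omega⟩).isLt; omega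
    have hpj : (p ⟨(p.symm ⟨N, by omega⟩).val, by omega⟩).val = N := by
      have := p.apply_symm_apply ⟨N, by omega⟩
      exact congrArg Fin.val this
    refine ⟨⟨⟨(p.symm ⟨N, by omega⟩).val, by omega⟩,
      ⟨decA p hjle hp hpj, decA_avoids p hjle hp hpj⟩,
      ⟨decB p hjle hp hpj, decB_avoids p hjle hp hpj⟩⟩, ?_⟩
    exact Subtype.ext (reconP_decomp p hjle hp hpj)

def KeyProp (n : ℕ) : Prop :=
  ∃ φ : NCt n ≃ Avt n, ∀ π : NCt n, Des (φ π).1 = Tset π.1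

lemma keyProp : ∀ n, KeyProp n := by
  intro n
  induction n using Nat.strong_induction_on with
  | _ n IH =>
    cases n with
    | zero =>
      refine ⟨⟨fun _ => ⟨Equiv.refl _, fun a => a.elim0⟩,
        fun _ => ⟨⊤, by rintro ⟨a, -⟩; exact a.elim0⟩,
        fun σ => Subtype.ext (Setoid.ext fun a => a.elim0),
        fun τ => Subtype.ext (Equiv.ext fun a => a.elim0)⟩, ?_⟩
      intro π
      ext i
      constructor
      · rintro ⟨⟨h1, h2⟩, -⟩; omega
      · rintro ⟨⟨h1, h2⟩, -⟩; omega
    | succ N =>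
      obtain ⟨Φ, hΦ⟩ : ∃ Φ : ∀ m : ℕ, m < N + 1 → NCt m ≃ Avt m,
          ∀ (m : ℕ) (hm : m < N + 1) (π : NCt m), Des ((Φ m hm) π).1 = Tset π.1 :=
        ⟨fun m hm => (IH m hm).choose, fun m hm => (IH m hm).choose_spec⟩
      let mid : (Σ j : Fin (N + 1), NCt j.val × NCt (N - j.val)) ≃
          (Σ j : Fin (N + 1), Avt j.val × Avt (N - j.val)) :=
        Equiv.sigmaCongrRight (fun j =>
          Equiv.prodCongr (Φ j.val j.isLt) (Φ (N - j.val) (by omega)))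
      let eS := Equiv.ofBijective (GS (N := N)) GS_bij
      let eP := Equiv.ofBijective (GP (N := N)) GP_bij
      have main : ∀ s : (Σ j : Fin (N + 1), NCt j.val × NCt (N - j.val)),
          Des ((mid.trans eP) s).1 = Tset (eS s).1 := by
        rintro ⟨j, ⟨rA, hncA⟩, ⟨rB, hncB⟩⟩
        have hjle : j.val ≤ N := by have := j.isLt; omega
        show Des (GP ⟨j, (Φ j.val j.isLt) ⟨rA, hncA⟩, (Φ (N - j.val) (by omega)) ⟨rB, hncB⟩⟩).1
          = Tset (GS ⟨j, ⟨rA, hncA⟩, ⟨rB, hncB⟩⟩).1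
      -- GP at this sigma: reconP of components
        have lA := hΦ j.val j.isLt ⟨rA, hncA⟩
        have lB := hΦ (N - j.val) (by omega) ⟨rB, hncB⟩
        ext i
        show i ∈ Des (reconP ((Φ j.val j.isLt) ⟨rA, hncA⟩).1
            ((Φ (N - j.val) (by omega)) ⟨rB, hncB⟩).1 hjle)
          ↔ i ∈ Tset (reconS N j.val rA rB)
        rw [des_reconP _ _ (by omega : j.val ≤ N), tset_reconS rA rB hjle, lA, lB]
      refine ⟨eS.symm.trans (mid.trans eP), ?_⟩
      intro π
      have h1 := main (eS.symm π)
      rw [Equiv.apply_symm_apply] at h1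
      simpa [Equiv.trans_apply] using h1

end Assembly

theorem stmt2 (n : ℕ) (hn : 1 ≤ n) :
    ∃ φ : {r : Setoid (Fin n) // IsNoncrossing r} ≃
          {p : Equiv.Perm (Fin n) // Avoids132 p},
      ∀ π τ : {r : Setoid (Fin n) // IsNoncrossing r},
        π.1 ≤ τ.1 → Des (φ π).1 ⊆ Des (φ τ).1 := by
  obtain ⟨φ, hφ⟩ := keyProp n
  refine ⟨φ, ?_⟩
  intro π τ hle
  rw [hφ π, hφ τ]
  rintro i ⟨h, y, hy, hrel⟩
  exact ⟨h, y, hy, Setoid.le_def.mp hle hrel⟩
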